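/- Let {x_n} be a sequence of nonzero vectors in a separable Hilbert space H that admits an orthogonal decomposition into subsequences {x_n^i} (indexed by i) whose closed spans are mutually orthogonal, and suppose each subsequence {x_n^i} has cardinality at most N for some fixed N. Then the normalized sequence {x_n/‖x_n‖} is a Bessel sequence with Bessel bound N. -/

import Mathlib

open scoped ComplexInnerProductSpace ENNReal
open Filter Topology

noncomputable section

variable {E : Type*} [NormedAddCommGroup E] [InnerProductSpace ℂ E]

/-- `y` is a Bessel sequence with Bessel bound `B`:
`∑ᵢ |⟪z, yᵢ⟫|² ≤ B‖z‖²` for all `z` (sum taken in `ℝ≥0∞` so that divergence is handled). -/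
def BesselWith {ι : Type*} (y : ι → E) (B : ℝ) : Prop :=
  ∀ z : E, ∑' i, ENNReal.ofReal (‖⟪z, y i⟫‖ ^ 2) ≤ ENNReal.ofReal (B * ‖z‖ ^ 2)

/-- `y` satisfies the lower frame condition with bound `A`:
`A‖z‖² ≤ ∑ᵢ |⟪z, yᵢ⟫|²` for all `z`. -/
def LowerFrameWith {ι : Type*} (y : ι → E) (A : ℝ) : Prop :=
  ∀ z : E, ENNReal.ofReal (A * ‖z‖ ^ 2) ≤ ∑' i, ENNReal.ofReal (‖⟪z, y i⟫‖ ^ 2)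

/-- `y` is a frame with frame bounds `A ≤ B`. -/
def FrameWith {ι : Type*} (y : ι → E) (A B : ℝ) : Prop :=
  0 < A ∧ A ≤ B ∧ LowerFrameWith y A ∧ BesselWith y B

/-- The normalized sequence `yᵢ/‖yᵢ‖`. -/
def normalizeSeq {ι : Type*} (y : ι → E) : ι → E := fun i => (‖y i‖ : ℂ)⁻¹ • y i

/-- A sequence of nonzero vectors admitting an orthogonal decomposition into
blocks of cardinality at most `N` normalizes to a Bessel sequence with bound `N`. -/
theorem stmt1 {H : Type*} [NormedAddCommGroup H] [InnerProductSpace ℂ H]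
    (x : ℕ → H) (hx : ∀ n, x n ≠ 0) (S : ℕ → Set ℕ)
    (hpart : ∀ n, ∃! i, n ∈ S i)
    (horth : ∀ i j, i ≠ j →
      ∀ u ∈ (Submodule.span ℂ (x '' S i)).topologicalClosure,
      ∀ v ∈ (Submodule.span ℂ (x '' S j)).topologicalClosure, ⟪u, v⟫ = 0)
    (N : ℕ) (hcard : ∀ i, (S i).encard ≤ N) :
    BesselWith (normalizeSeq x) (N : ℝ) := by
  classical
  intro z
  set e : ℕ → H := normalizeSeq x with he
  have hen : ∀ n, ‖e n‖ = 1 := by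
    intro n
    have hxn : ‖x n‖ ≠ 0 := norm_ne_zero_iff.mpr (hx n)
    simp [he, normalizeSeq, norm_smul, inv_mul_cancel₀ hxn]
  set V : ℕ → Submodule ℂ H := fun i => Submodule.span ℂ (x '' S i) with hV
  have hfinS : ∀ i, (S i).Finite := fun i => Set.finite_of_encard_le_coe (hcard i)
  have hfd : ∀ i, FiniteDimensional ℂ (V i) := fun i =>
    Module.Finite.span_of_finite ℂ ((hfinS i).image x)
  have hproj : ∀ i, Submodule.HasOrthogonalProjection (V i) := fun i => by
    haveI := hfd i
    infer_instance
  let P : ℕ → H := fun i => (@Submodule.orthogonalProjectionOnto ℂ H _ _ _ (V i) (hproj i) z : H)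
  have hPmem : ∀ i, P i ∈ V i := fun i => ((@Submodule.orthogonalProjectionOnto ℂ H _ _ _ (V i) (hproj i)) z).2
  have hsub : ∀ i, z - P i ∈ (V i)ᗮ := fun i =>
    @Submodule.sub_starProjection_mem_orthogonal ℂ H _ _ _ (V i) (hproj i) z
  have hemem : ∀ i n, n ∈ S i → e n ∈ V i := by
    intro i n hn
    exact Submodule.smul_mem _ _ (Submodule.subset_span ⟨n, hn, rfl⟩)
  -- per-term bound
  have hterm : ∀ i n, n ∈ S i → ‖⟪z, e n⟫‖ ^ 2 ≤ ‖P i‖ ^ 2 := by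
    intro i n hn
    have h0 : ⟪z - P i, e n⟫ = 0 := by
      have h := (Submodule.mem_orthogonal (V i) (z - P i)).mp (hsub i) (e n) (hemem i n hn)
      have h2 := congrArg (starRingEnd ℂ) h
      rwa [inner_conj_symm, map_zero] at h2
    have heq : ⟪z, e n⟫ = ⟪P i, e n⟫ := by
      have h3 : ⟪z - P i, e n⟫ = ⟪z, e n⟫ - ⟪P i, e n⟫ := inner_sub_left _ _ _
      rw [h0] at h3
      linear_combination -h3
    rw [heq]
    have h1 : ‖⟪P i, e n⟫‖ ≤ ‖P i‖ := by
      calc ‖⟪P i, e n⟫‖ ≤ ‖P i‖ * ‖e n‖ := norm_inner_le_norm _ _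
        _ = ‖P i‖ := by rw [hen n, mul_one]
    exact pow_le_pow_left₀ (norm_nonneg _) h1 2
  -- orthogonality of projections
  have hPorth : ∀ i j, i ≠ j → ⟪P i, P j⟫ = 0 := fun i j hij =>
    horth i j hij (P i) (Submodule.le_topologicalClosure _ (hPmem i))
      (P j) (Submodule.le_topologicalClosure _ (hPmem j))
  -- ⟪z, P i⟫ = ‖P i‖²
  have hzP : ∀ i, ⟪z, P i⟫ = ((‖P i‖ ^ 2 : ℝ) : ℂ) := by
    intro i
    have h0 : ⟪z - P i, P i⟫ = 0 := by
      have h := (Submodule.mem_orthogonal (V i) (z - P i)).mp (hsub i) (P i) (hPmem i)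
      have h2 := congrArg (starRingEnd ℂ) h
      rwa [inner_conj_symm, map_zero] at h2
    have h3 : ⟪z - P i, P i⟫ = ⟪z, P i⟫ - ⟪P i, P i⟫ := inner_sub_left _ _ _
    rw [h0] at h3
    have h2 : ⟪z, P i⟫ = ⟪P i, P i⟫ := by linear_combination -h3
    rw [h2, inner_self_eq_norm_sq_to_K]
    norm_cast
  -- finite-sum Bessel inequality for projections
  have key : ∀ F : Finset ℕ, ∑ i ∈ F, ‖P i‖ ^ 2 ≤ ‖z‖ ^ 2 := by
    intro F
    set w : H := ∑ i ∈ F, P i with hw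
    have hww : ⟪w, w⟫ = ((∑ i ∈ F, ‖P i‖ ^ 2 : ℝ) : ℂ) := by
      rw [hw, sum_inner]
      have hdiag : ∀ i ∈ F, ⟪P i, ∑ j ∈ F, P j⟫ = ((‖P i‖ ^ 2 : ℝ) : ℂ) := by
        intro i hi
        rw [inner_sum, Finset.sum_eq_single_of_mem i hi
          (fun j hj hji => hPorth i j (Ne.symm hji)), inner_self_eq_norm_sq_to_K]
        norm_cast
      rw [Finset.sum_congr rfl hdiag]
      push_cast
      ring
    have hwnorm : ‖w‖ ^ 2 = ∑ i ∈ F, ‖P i‖ ^ 2 := by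
      have h := inner_self_eq_norm_sq (𝕜 := ℂ) w
      rw [hww] at h
      simpa [← Complex.ofReal_pow] using h.symm
    have hzw : ⟪z, w⟫ = ((∑ i ∈ F, ‖P i‖ ^ 2 : ℝ) : ℂ) := by
      rw [hw, inner_sum, Finset.sum_congr rfl (fun i _ => hzP i)]
      push_cast
      ring
    have hS : ∑ i ∈ F, ‖P i‖ ^ 2 ≤ ‖z‖ * ‖w‖ := by
      have h1 : ‖⟪z, w⟫‖ ≤ ‖z‖ * ‖w‖ := norm_inner_le_norm _ _
      rw [hzw] at h1
      have h2 : ‖((∑ i ∈ F, ‖P i‖ ^ 2 : ℝ) : ℂ)‖ = |∑ i ∈ F, ‖P i‖ ^ 2| :=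
        Complex.norm_real _
      rw [h2] at h1
      exact le_trans (le_abs_self _) h1
    rw [← hwnorm] at hS ⊢
    nlinarith [norm_nonneg w, norm_nonneg z, sq_nonneg (‖z‖ - ‖w‖)]
  -- tsum Bessel for projections
  have hPtsum : ∑' i, ENNReal.ofReal (‖P i‖ ^ 2) ≤ ENNReal.ofReal (‖z‖ ^ 2) := by
    rw [ENNReal.tsum_eq_iSup_sum]
    apply iSup_le
    intro F
    rw [← ENNReal.ofReal_sum_of_nonneg (fun i _ => by positivity)]
    exact ENNReal.ofReal_le_ofReal (key F)
  -- reindex via the partition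
  let φ : (Σ i, S i) → ℕ := fun p => p.2
  have hφbij : Function.Bijective φ := by
    constructor
    · rintro ⟨i, n, hn⟩ ⟨j, m, hm⟩ h
      simp only [φ] at h
      obtain ⟨k, -, hk⟩ := hpart n
      have hij : i = j := by rw [hk i hn, hk j (h ▸ hm)]
      subst hij
      simp_all
    · intro n
      obtain ⟨i, hi, -⟩ := hpart n
      exact ⟨⟨i, n, hi⟩, rfl⟩
  have hre : ∑' n, ENNReal.ofReal (‖⟪z, e n⟫‖ ^ 2)
      = ∑' i, ∑' (n : S i), ENNReal.ofReal (‖⟪z, e (n : ℕ)⟫‖ ^ 2) := by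
    rw [← (Equiv.ofBijective φ hφbij).tsum_eq (fun n => ENNReal.ofReal (‖⟪z, e n⟫‖ ^ 2))]
    exact ENNReal.tsum_sigma' _
  -- block bound
  have hblock : ∀ i, ∑' (n : S i), ENNReal.ofReal (‖⟪z, e (n : ℕ)⟫‖ ^ 2)
      ≤ (N : ℝ≥0∞) * ENNReal.ofReal (‖P i‖ ^ 2) := by
    intro i
    haveI : Fintype (S i) := (hfinS i).fintype
    rw [tsum_fintype]
    have hb : ∀ n : S i, ENNReal.ofReal (‖⟪z, e (n : ℕ)⟫‖ ^ 2) ≤ ENNReal.ofReal (‖P i‖ ^ 2) :=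
      fun n => ENNReal.ofReal_le_ofReal (hterm i n n.2)
    calc ∑ n : S i, ENNReal.ofReal (‖⟪z, e (n : ℕ)⟫‖ ^ 2)
        ≤ Finset.univ.card • ENNReal.ofReal (‖P i‖ ^ 2) :=
          Finset.sum_le_card_nsmul _ _ _ (fun n _ => hb n)
      _ = (Fintype.card (S i) : ℝ≥0∞) * ENNReal.ofReal (‖P i‖ ^ 2) := by
          rw [nsmul_eq_mul, Finset.card_univ]
      _ ≤ (N : ℝ≥0∞) * ENNReal.ofReal (‖P i‖ ^ 2) := by
          apply mul_le_mul_left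
          have hc : (S i).encard = (Fintype.card (S i) : ℕ∞) := by
            rw [Set.encard_eq_coe_toFinset_card, Set.toFinset_card]
          have h4 : (Fintype.card (S i) : ℕ∞) ≤ (N : ℕ∞) := hc ▸ hcard i
          have h5 : Fintype.card (S i) ≤ N := by exact_mod_cast h4
          exact_mod_cast Nat.cast_le.mpr h5
  calc ∑' n, ENNReal.ofReal (‖⟪z, e n⟫‖ ^ 2)
      = ∑' i, ∑' (n : S i), ENNReal.ofReal (‖⟪z, e (n : ℕ)⟫‖ ^ 2) := hre
    _ ≤ ∑' i, (N : ℝ≥0∞) * ENNReal.ofReal (‖P i‖ ^ 2) := ENNReal.tsum_le_tsum hblock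
    _ = (N : ℝ≥0∞) * ∑' i, ENNReal.ofReal (‖P i‖ ^ 2) := ENNReal.tsum_mul_left
    _ ≤ (N : ℝ≥0∞) * ENNReal.ofReal (‖z‖ ^ 2) := mul_le_mul_right hPtsum _
    _ = ENNReal.ofReal ((N : ℝ) * ‖z‖ ^ 2) := by
        rw [ENNReal.ofReal_mul (by positivity)]
        congr 1
        exact (ENNReal.ofReal_natCast N).symm
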